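/- Let K be an algebraically closed field, let D be a group, let I be a normal subgroup of D such that the quotient D/I is commutative, and let ρ : D → GL₂(K) be a group homomorphism. Then the following are equivalent: (i) (ρ(i) − 1)² = 0 for all i ∈ I; (ii) tr ρ(i) = 2 and det ρ(i) = 1 for all i ∈ I; (iii) there exists P ∈ GL₂(K) such that P⁻¹·ρ(d)·P is upper triangular for every d ∈ D, and P⁻¹·ρ(i)·P is upper triangular with both diagonal entries equal to 1 for every i ∈ I; (iv) det ρ(i) = 1 and tr(ρ(d)·ρ(i)) = tr(ρ(d)) for all i ∈ I and all d ∈ D. -/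

import Mathlib

open Matrix

namespace Stmt6Aux

variable {K : Type*} [Field K]

lemma mulVec_apply' (M : Matrix (Fin 2) (Fin 2) K) (v : Fin 2 → K) (i : Fin 2) :
    M.mulVec v i = M i 0 * v 0 + M i 1 * v 1 := by
  simp [Matrix.mulVec, dotProduct, Fin.sum_univ_two]

/-- If `B ≠ 0` kills a nonzero vector `v`, then every vector it kills is a multiple of `v`. -/
lemma ker_span {B : Matrix (Fin 2) (Fin 2) K} {v w : Fin 2 → K}
    (hB : B ≠ 0) (hv : B.mulVec v = 0) (hv0 : v ≠ 0) (hw : B.mulVec w = 0) :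
    ∃ c : K, w = c • v := by
  have hrow : ∃ i : Fin 2, ¬(B i 0 = 0 ∧ B i 1 = 0) := by
    by_contra h
    push_neg at h
    apply hB
    ext i j
    fin_cases j <;> simp [(h i).1, (h i).2]
  obtain ⟨i, hi⟩ := hrow
  have ev : B i 0 * v 0 + B i 1 * v 1 = 0 := by
    rw [← mulVec_apply' B v i, hv]; rfl
  have ew : B i 0 * w 0 + B i 1 * w 1 = 0 := by
    rw [← mulVec_apply' B w i, hw]; rfl
  by_cases hp : B i 0 = 0
  · have hq : B i 1 ≠ 0 := fun hq => hi ⟨hp, hq⟩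
    rw [hp] at ev ew
    have hv1 : v 1 = 0 := by
      exact (mul_eq_zero.mp (by linear_combination ev)).resolve_left hq
    have hw1 : w 1 = 0 := by
      exact (mul_eq_zero.mp (by linear_combination ew)).resolve_left hq
    have hv00 : v 0 ≠ 0 := by
      intro h0
      apply hv0; funext j; fin_cases j <;> simpa [h0]
    refine ⟨w 0 / v 0, ?_⟩
    funext j; fin_cases j
    · simp [hv00]
    · simp [hv1, hw1]
  · have hv1 : v 1 ≠ 0 := by
      intro h1
      have : v 0 = 0 := by
        rw [h1, mul_zero, add_zero] at ev
        exact (mul_eq_zero.mp ev).resolve_left hp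
      apply hv0; funext j; fin_cases j <;> simpa [h1, this]
    refine ⟨w 1 / v 1, ?_⟩
    funext j; fin_cases j
    · show w 0 = w 1 / v 1 * v 0
      field_simp
      -- B i 0 * v 0 + B i 1 * v 1 = 0, B i 0 * w 0 + B i 1 * w 1 = 0
      -- want w 0 * v 1 = w 1 * v 0
      have := mul_left_cancel₀ hp (show B i 0 * (w 0 * v 1) = B i 0 * (w 1 * v 0) by
        linear_combination v 1 * ew - w 1 * ev)
      linear_combination this
    · show w 1 = w 1 / v 1 * v 1
      field_simp

lemma exists_ker_vec {B : Matrix (Fin 2) (Fin 2) K} (hB : B ≠ 0) (hd : B.det = 0) :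
    ∃ v : Fin 2 → K, v ≠ 0 ∧ B.mulVec v = 0 := by
  rw [Matrix.det_fin_two] at hd
  by_cases h : B 0 0 = 0 ∧ B 0 1 = 0
  · refine ⟨![B 1 1, -(B 1 0)], ?_, ?_⟩
    · intro h0
      apply hB
      have h1 := congrFun h0 0
      have h2 := congrFun h0 1
      simp at h1 h2
      ext i j
      fin_cases i <;> fin_cases j <;> simp [h.1, h.2, h1, h2]
    · funext i
      fin_cases i <;> simp [mulVec_apply']
      · linear_combination hd
      · ring
  · refine ⟨![B 0 1, -(B 0 0)], ?_, ?_⟩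
    · intro h0
      apply h
      have h1 := congrFun h0 0
      have h2 := congrFun h0 1
      simp at h1 h2
      exact ⟨h2, h1⟩
    · funext i
      fin_cases i <;>
        simp [mulVec_apply'] <;> [skip; linear_combination -hd] <;> ring


/-- Anticommutator identity for trace-zero 2x2 matrices with `tr (NM) = 0`. -/
lemma anticomm {N M : Matrix (Fin 2) (Fin 2) K}
    (hN : N 0 0 + N 1 1 = 0) (hM : M 0 0 + M 1 1 = 0)
    (hNM : N 0 0 * M 0 0 + N 0 1 * M 1 0 + (N 1 0 * M 0 1 + N 1 1 * M 1 1) = 0) :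
    N * M + M * N = 0 := by
  ext i j
  fin_cases i <;> fin_cases j <;>
    simp [Matrix.mul_apply, Fin.sum_univ_two] <;>
    [linear_combination hNM + M 0 0 * hN - N 1 1 * hM;
     linear_combination M 0 1 * hN + N 0 1 * hM;
     linear_combination M 1 0 * hN + N 1 0 * hM;
     linear_combination hNM - M 0 0 * hN + N 1 1 * hM]

/-- Conjugating by a matrix whose first column is an eigenvector of `M`. -/
lemma conj_entries {P M : GL (Fin 2) K} {c : K}
    (hM : (M : Matrix (Fin 2) (Fin 2) K).mulVec (fun i => (P : Matrix (Fin 2) (Fin 2) K) i 0)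
      = c • (fun i => (P : Matrix (Fin 2) (Fin 2) K) i 0)) :
    ((P⁻¹ * M * P : GL (Fin 2) K) : Matrix (Fin 2) (Fin 2) K) 1 0 = 0 ∧
    ((P⁻¹ * M * P : GL (Fin 2) K) : Matrix (Fin 2) (Fin 2) K) 0 0 = c := by
  set Pm : Matrix (Fin 2) (Fin 2) K := (P : Matrix (Fin 2) (Fin 2) K) with hPm
  have hdet : Pm 0 0 * Pm 1 1 - Pm 0 1 * Pm 1 0 ≠ 0 := by
    rw [← Matrix.det_fin_two]
    exact ((Matrix.isUnit_iff_isUnit_det _).mp P.isUnit).ne_zero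
  set Q : Matrix (Fin 2) (Fin 2) K := ((P⁻¹ * M * P : GL (Fin 2) K) : Matrix (Fin 2) (Fin 2) K)
    with hQ
  have key : Pm * Q = (M : Matrix (Fin 2) (Fin 2) K) * Pm := by
    rw [hQ, hPm, ← Units.val_mul, show P * (P⁻¹ * M * P) = M * P by group, Units.val_mul]
  have hMc : ∀ i : Fin 2,
      (M : Matrix (Fin 2) (Fin 2) K) i 0 * Pm 0 0 + (M : Matrix (Fin 2) (Fin 2) K) i 1 * Pm 1 0
        = c * Pm i 0 := by
    intro i
    have := congrFun hM i
    rw [mulVec_apply'] at this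
    simpa using this
  have eq0 : Pm 0 0 * Q 0 0 + Pm 0 1 * Q 1 0 = c * Pm 0 0 := by
    have := congrFun (congrFun key 0) 0
    simp only [Matrix.mul_apply, Fin.sum_univ_two] at this
    rw [this]; exact hMc 0
  have eq1 : Pm 1 0 * Q 0 0 + Pm 1 1 * Q 1 0 = c * Pm 1 0 := by
    have := congrFun (congrFun key 1) 0
    simp only [Matrix.mul_apply, Fin.sum_univ_two] at this
    rw [this]; exact hMc 1
  have h10 : Q 1 0 * (Pm 0 0 * Pm 1 1 - Pm 0 1 * Pm 1 0) = 0 := by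
    linear_combination Pm 0 0 * eq1 - Pm 1 0 * eq0
  have hq10 : Q 1 0 = 0 := (mul_eq_zero.mp h10).resolve_right hdet
  refine ⟨hq10, ?_⟩
  have h00 : (Q 0 0 - c) * (Pm 0 0 * Pm 1 1 - Pm 0 1 * Pm 1 0) = 0 := by
    linear_combination Pm 1 1 * eq0 - Pm 0 1 * eq1
  exact sub_eq_zero.mp ((mul_eq_zero.mp h00).resolve_right hdet)

end Stmt6Aux

open Stmt6Aux in

/-- Let `K` be an algebraically closed field, `D` a group, `I` a normal subgroup of `D`
with commutative quotient, and `ρ : D → GL₂(K)` a homomorphism. The following are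
equivalent:
(i) `ρ` is unipotent on `I`;
(ii) `tr ρ(i) = 2` and `det ρ(i) = 1` for all `i ∈ I`;
(iii) `ρ(D)` can be simultaneously upper-triangularized with `ρ(I)` unipotent
upper-triangular;
(iv) `det ρ(i) = 1` and `tr (ρ(d)·ρ(i)) = tr ρ(d)` for all `i ∈ I`, `d ∈ D`. -/
theorem stmt6 {K : Type*} [Field K] [IsAlgClosed K] {D : Type*} [Group D]
    (I : Subgroup D) [I.Normal]
    (hcomm : ∀ a b : D, a * b * a⁻¹ * b⁻¹ ∈ I)
    (ρ : D →* GL (Fin 2) K) :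
    List.TFAE [
      ∀ i ∈ I, ((ρ i : Matrix (Fin 2) (Fin 2) K) - 1) ^ 2 = 0,
      ∀ i ∈ I, (ρ i : Matrix (Fin 2) (Fin 2) K).trace = 2 ∧
        (ρ i : Matrix (Fin 2) (Fin 2) K).det = 1,
      ∃ P : GL (Fin 2) K,
        (∀ d : D, ((P⁻¹ * ρ d * P : GL (Fin 2) K) : Matrix (Fin 2) (Fin 2) K) 1 0 = 0) ∧
        (∀ i ∈ I,
          ((P⁻¹ * ρ i * P : GL (Fin 2) K) : Matrix (Fin 2) (Fin 2) K) 1 0 = 0 ∧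
          ((P⁻¹ * ρ i * P : GL (Fin 2) K) : Matrix (Fin 2) (Fin 2) K) 0 0 = 1 ∧
          ((P⁻¹ * ρ i * P : GL (Fin 2) K) : Matrix (Fin 2) (Fin 2) K) 1 1 = 1),
      ∀ i ∈ I, (ρ i : Matrix (Fin 2) (Fin 2) K).det = 1 ∧
        ∀ d : D,
          ((ρ d : Matrix (Fin 2) (Fin 2) K) * (ρ i : Matrix (Fin 2) (Fin 2) K)).trace =
            (ρ d : Matrix (Fin 2) (Fin 2) K).trace
    ] := by
  classical
  have t21 : (∀ i ∈ I, (ρ i : Matrix (Fin 2) (Fin 2) K).trace = 2 ∧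
        (ρ i : Matrix (Fin 2) (Fin 2) K).det = 1) →
      ∀ i ∈ I, ((ρ i : Matrix (Fin 2) (Fin 2) K) - 1) ^ 2 = 0 := by
    intro h i hi
    obtain ⟨ht, hd⟩ := h i hi
    rw [Matrix.trace_fin_two] at ht
    rw [Matrix.det_fin_two] at hd
    ext a b
    fin_cases a <;> fin_cases b <;>
      simp [pow_two, Matrix.mul_apply, Fin.sum_univ_two, Matrix.sub_apply, Matrix.one_apply] <;>
      [linear_combination (ρ i : Matrix (Fin 2) (Fin 2) K) 0 0 * ht - hd;
       linear_combination (ρ i : Matrix (Fin 2) (Fin 2) K) 0 1 * ht;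
       linear_combination (ρ i : Matrix (Fin 2) (Fin 2) K) 1 0 * ht;
       linear_combination (ρ i : Matrix (Fin 2) (Fin 2) K) 1 1 * ht - hd]
  have t12 : (∀ i ∈ I, ((ρ i : Matrix (Fin 2) (Fin 2) K) - 1) ^ 2 = 0) →
      ∀ i ∈ I, (ρ i : Matrix (Fin 2) (Fin 2) K).trace = 2 ∧
        (ρ i : Matrix (Fin 2) (Fin 2) K).det = 1 := by
    intro h i hi
    set A : Matrix (Fin 2) (Fin 2) K := (ρ i : Matrix (Fin 2) (Fin 2) K) with hA
    have hsq := h i hi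
    have e00 : (A 0 0 - 1) * (A 0 0 - 1) + A 0 1 * A 1 0 = 0 := by
      have h' := congrFun (congrFun hsq 0) 0
      simp [pow_two, Matrix.mul_apply, Fin.sum_univ_two, Matrix.sub_apply,
        Matrix.one_apply] at h'
      linear_combination h'
    have e01 : (A 0 0 - 1) * A 0 1 + A 0 1 * (A 1 1 - 1) = 0 := by
      have h' := congrFun (congrFun hsq 0) 1
      simp [pow_two, Matrix.mul_apply, Fin.sum_univ_two, Matrix.sub_apply,
        Matrix.one_apply] at h'
      linear_combination h'
    have e10 : A 1 0 * (A 0 0 - 1) + (A 1 1 - 1) * A 1 0 = 0 := by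
      have h' := congrFun (congrFun hsq 1) 0
      simp [pow_two, Matrix.mul_apply, Fin.sum_univ_two, Matrix.sub_apply,
        Matrix.one_apply] at h'
      linear_combination h'
    have e11 : A 1 0 * A 0 1 + (A 1 1 - 1) * (A 1 1 - 1) = 0 := by
      have h' := congrFun (congrFun hsq 1) 1
      simp [pow_two, Matrix.mul_apply, Fin.sum_univ_two, Matrix.sub_apply,
        Matrix.one_apply] at h'
      linear_combination h'
    have htr : A 0 0 + A 1 1 = 2 := by
      by_cases hb : A 0 1 = 0
      · by_cases hc : A 1 0 = 0
        · have h1 : A 0 0 = 1 := by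
            have h' : (A 0 0 - 1) * (A 0 0 - 1) = 0 := by linear_combination e00 - A 0 1 * hc
            have := mul_self_eq_zero.mp h'
            linear_combination this
          have h2 : A 1 1 = 1 := by
            have h' : (A 1 1 - 1) * (A 1 1 - 1) = 0 := by linear_combination e11 - A 0 1 * hc
            have := mul_self_eq_zero.mp h'
            linear_combination this
          rw [h1, h2]; norm_num
        · have h' : A 1 0 * (A 0 0 + A 1 1 - 2) = 0 := by linear_combination e10
          have := (mul_eq_zero.mp h').resolve_left hc
          linear_combination this
      · have h' : A 0 1 * (A 0 0 + A 1 1 - 2) = 0 := by linear_combination e01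
        have := (mul_eq_zero.mp h').resolve_left hb
        linear_combination this
    constructor
    · rw [Matrix.trace_fin_two]; exact htr
    · rw [Matrix.det_fin_two]
      linear_combination A 0 0 * htr - e00
  have t34 : (∃ P : GL (Fin 2) K,
        (∀ d : D, ((P⁻¹ * ρ d * P : GL (Fin 2) K) : Matrix (Fin 2) (Fin 2) K) 1 0 = 0) ∧
        (∀ i ∈ I,
          ((P⁻¹ * ρ i * P : GL (Fin 2) K) : Matrix (Fin 2) (Fin 2) K) 1 0 = 0 ∧
          ((P⁻¹ * ρ i * P : GL (Fin 2) K) : Matrix (Fin 2) (Fin 2) K) 0 0 = 1 ∧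
          ((P⁻¹ * ρ i * P : GL (Fin 2) K) : Matrix (Fin 2) (Fin 2) K) 1 1 = 1)) →
      ∀ i ∈ I, (ρ i : Matrix (Fin 2) (Fin 2) K).det = 1 ∧
        ∀ d : D,
          ((ρ d : Matrix (Fin 2) (Fin 2) K) * (ρ i : Matrix (Fin 2) (Fin 2) K)).trace =
            (ρ d : Matrix (Fin 2) (Fin 2) K).trace := by
    rintro ⟨P, hPd, hPI⟩ i hi
    have hPP : ((P⁻¹ : GL (Fin 2) K) : Matrix (Fin 2) (Fin 2) K)
        * (P : Matrix (Fin 2) (Fin 2) K) = 1 := by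
      rw [← Units.val_mul, inv_mul_cancel, Units.val_one]
    have hPP' : (P : Matrix (Fin 2) (Fin 2) K)
        * ((P⁻¹ : GL (Fin 2) K) : Matrix (Fin 2) (Fin 2) K) = 1 := by
      rw [← Units.val_mul, mul_inv_cancel, Units.val_one]
    have tc : ∀ M : GL (Fin 2) K,
        ((P⁻¹ * M * P : GL (Fin 2) K) : Matrix (Fin 2) (Fin 2) K).trace
          = (M : Matrix (Fin 2) (Fin 2) K).trace := by
      intro M
      rw [Units.val_mul, Units.val_mul, Matrix.trace_mul_cycle, hPP', Matrix.one_mul]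
    obtain ⟨h10, h00, h11⟩ := hPI i hi
    have hdc : ((P⁻¹ * ρ i * P : GL (Fin 2) K) : Matrix (Fin 2) (Fin 2) K).det
        = (ρ i : Matrix (Fin 2) (Fin 2) K).det := by
      rw [Units.val_mul, Units.val_mul, Matrix.det_mul, Matrix.det_mul]
      have h1 : ((P⁻¹ : GL (Fin 2) K) : Matrix (Fin 2) (Fin 2) K).det
          * ((P : GL (Fin 2) K) : Matrix (Fin 2) (Fin 2) K).det = 1 := by
        rw [← Matrix.det_mul, hPP, Matrix.det_one]
      calc ((P⁻¹ : GL (Fin 2) K) : Matrix (Fin 2) (Fin 2) K).det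
            * (ρ i : Matrix (Fin 2) (Fin 2) K).det
            * ((P : GL (Fin 2) K) : Matrix (Fin 2) (Fin 2) K).det
          = (ρ i : Matrix (Fin 2) (Fin 2) K).det
            * (((P⁻¹ : GL (Fin 2) K) : Matrix (Fin 2) (Fin 2) K).det
              * ((P : GL (Fin 2) K) : Matrix (Fin 2) (Fin 2) K).det) := by ring
        _ = (ρ i : Matrix (Fin 2) (Fin 2) K).det := by rw [h1, mul_one]
    refine ⟨?_, ?_⟩
    · rw [← hdc, Matrix.det_fin_two, h10, h00, h11]; ring
    · intro d
      have hmul : ((P⁻¹ * ρ d * P : GL (Fin 2) K) : Matrix (Fin 2) (Fin 2) K)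
          * ((P⁻¹ * ρ i * P : GL (Fin 2) K) : Matrix (Fin 2) (Fin 2) K)
          = ((P⁻¹ * (ρ d * ρ i) * P : GL (Fin 2) K) : Matrix (Fin 2) (Fin 2) K) := by
        rw [← Units.val_mul]
        congr 1
        group
      have h1 : ((ρ d : Matrix (Fin 2) (Fin 2) K) * (ρ i : Matrix (Fin 2) (Fin 2) K)).trace
          = ((P⁻¹ * (ρ d * ρ i) * P : GL (Fin 2) K) : Matrix (Fin 2) (Fin 2) K).trace := by
        rw [tc (ρ d * ρ i), Units.val_mul]
      rw [h1, ← hmul, Matrix.trace_fin_two, Matrix.mul_apply, Matrix.mul_apply,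
        Fin.sum_univ_two, Fin.sum_univ_two, h10, h00, h11, hPd d, ← tc (ρ d), Matrix.trace_fin_two]
      ring
  have t42 : (∀ i ∈ I, (ρ i : Matrix (Fin 2) (Fin 2) K).det = 1 ∧
        ∀ d : D,
          ((ρ d : Matrix (Fin 2) (Fin 2) K) * (ρ i : Matrix (Fin 2) (Fin 2) K)).trace =
            (ρ d : Matrix (Fin 2) (Fin 2) K).trace) →
      ∀ i ∈ I, (ρ i : Matrix (Fin 2) (Fin 2) K).trace = 2 ∧
        (ρ i : Matrix (Fin 2) (Fin 2) K).det = 1 := by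
    intro h i hi
    obtain ⟨hdet, htr⟩ := h i hi
    refine ⟨?_, hdet⟩
    have h1 := htr 1
    rw [_root_.map_one, Units.val_one, Matrix.one_mul, Matrix.trace_one] at h1
    rw [h1]
    norm_num
  have t23 : (∀ i ∈ I, (ρ i : Matrix (Fin 2) (Fin 2) K).trace = 2 ∧
        (ρ i : Matrix (Fin 2) (Fin 2) K).det = 1) →
      ∃ P : GL (Fin 2) K,
        (∀ d : D, ((P⁻¹ * ρ d * P : GL (Fin 2) K) : Matrix (Fin 2) (Fin 2) K) 1 0 = 0) ∧
        (∀ i ∈ I,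
          ((P⁻¹ * ρ i * P : GL (Fin 2) K) : Matrix (Fin 2) (Fin 2) K) 1 0 = 0 ∧
          ((P⁻¹ * ρ i * P : GL (Fin 2) K) : Matrix (Fin 2) (Fin 2) K) 0 0 = 1 ∧
          ((P⁻¹ * ρ i * P : GL (Fin 2) K) : Matrix (Fin 2) (Fin 2) K) 1 1 = 1) := by
    intro hTD
    have t1 := t21 hTD
    obtain ⟨v, hv0, hfix, heig⟩ :
        ∃ v : Fin 2 → K, v ≠ 0 ∧
          (∀ i ∈ I, (ρ i : Matrix (Fin 2) (Fin 2) K).mulVec v = v) ∧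
          (∀ d : D, ∃ c : K, (ρ d : Matrix (Fin 2) (Fin 2) K).mulVec v = c • v) := by
      by_cases hI : ∀ i ∈ I, (ρ i : Matrix (Fin 2) (Fin 2) K) = 1
      · by_cases hsc : ∀ d : D, ∃ c : K, (ρ d : Matrix (Fin 2) (Fin 2) K) = c • 1
        · refine ⟨![1, 0], ?_, ?_, ?_⟩
          · intro h0
            have := congrFun h0 0
            simp at this
          · intro i hi
            rw [hI i hi, Matrix.one_mulVec]
          · intro d
            obtain ⟨c, hc⟩ := hsc d
            exact ⟨c, by rw [hc, Matrix.smul_mulVec, Matrix.one_mulVec]⟩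
        · push_neg at hsc
          obtain ⟨d₀, hd₀⟩ := hsc
          set A : Matrix (Fin 2) (Fin 2) K := (ρ d₀ : Matrix (Fin 2) (Fin 2) K) with hA
          obtain ⟨lam, hlam⟩ : ∃ lam : K,
              lam ^ 2 - (A 0 0 + A 1 1) * lam + (A 0 0 * A 1 1 - A 0 1 * A 1 0) = 0 := by
            obtain ⟨lam, hr⟩ := IsAlgClosed.exists_root
              (Polynomial.C 1 * Polynomial.X ^ 2 + Polynomial.C (-(A 0 0 + A 1 1)) * Polynomial.X
                + Polynomial.C (A 0 0 * A 1 1 - A 0 1 * A 1 0))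
              (by rw [Polynomial.degree_quadratic one_ne_zero]; decide)
            refine ⟨lam, ?_⟩
            have h' : _ = (0 : K) := hr
            simp [Polynomial.eval_add, Polynomial.eval_mul] at h'
            linear_combination h'
          set B : Matrix (Fin 2) (Fin 2) K := A - lam • 1 with hB
          have hBne : B ≠ 0 := by
            intro h0
            exact hd₀ lam (sub_eq_zero.mp h0)
          have hBdet : B.det = 0 := by
            rw [Matrix.det_fin_two]
            simp only [hB, Matrix.sub_apply, Matrix.smul_apply, Matrix.one_apply_eq,
              Matrix.one_apply_ne (by decide : (0 : Fin 2) ≠ 1),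
              Matrix.one_apply_ne (by decide : (1 : Fin 2) ≠ 0), smul_eq_mul, mul_one, mul_zero,
              sub_zero]
            linear_combination hlam
          obtain ⟨v, hv0, hvker⟩ := exists_ker_vec hBne hBdet
          refine ⟨v, hv0, ?_, ?_⟩
          · intro i hi
            rw [hI i hi, Matrix.one_mulVec]
          · intro d
            have h1 : ρ (d * d₀ * d⁻¹ * d₀⁻¹) = 1 := by
              apply Units.ext
              rw [Units.val_one]
              exact hI _ (hcomm d d₀)
            have h2 : ρ d * ρ d₀ = ρ d₀ * ρ d := by
              have hdd : d * d₀ = (d * d₀ * d⁻¹ * d₀⁻¹) * (d₀ * d) := by group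
              calc ρ d * ρ d₀ = ρ (d * d₀) := (_root_.map_mul ρ d d₀).symm
                _ = ρ (d * d₀ * d⁻¹ * d₀⁻¹) * ρ (d₀ * d) := by rw [← _root_.map_mul, ← hdd]
                _ = ρ d₀ * ρ d := by rw [h1, one_mul, _root_.map_mul]
            have hcmat : (ρ d : Matrix (Fin 2) (Fin 2) K) * A = A * (ρ d : Matrix (Fin 2) (Fin 2) K) := by
              rw [hA, ← Units.val_mul, h2, Units.val_mul]
            have hcB : (ρ d : Matrix (Fin 2) (Fin 2) K) * B = B * (ρ d : Matrix (Fin 2) (Fin 2) K) := by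
              rw [hB, Matrix.mul_sub, Matrix.sub_mul, hcmat, Matrix.mul_smul, Matrix.smul_mul,
                Matrix.mul_one, Matrix.one_mul]
            have hk : B.mulVec ((ρ d : Matrix (Fin 2) (Fin 2) K).mulVec v) = 0 := by
              rw [Matrix.mulVec_mulVec, ← hcB, ← Matrix.mulVec_mulVec, hvker, Matrix.mulVec_zero]
            exact ker_span hBne hvker hv0 hk
      · push_neg at hI
        obtain ⟨i₀, hi₀I, hρi₀⟩ := hI
        set N : Matrix (Fin 2) (Fin 2) K := (ρ i₀ : Matrix (Fin 2) (Fin 2) K) - 1 with hN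
        have hNne : N ≠ 0 := sub_ne_zero.mpr hρi₀
        have hN2 : N * N = 0 := by
          have := t1 i₀ hi₀I
          rwa [pow_two] at this
        have hNdet : N.det = 0 := by
          have h' : N.det * N.det = 0 := by
            rw [← Matrix.det_mul, hN2, Matrix.det_zero]
          exact mul_self_eq_zero.mp h'
        obtain ⟨v, hv0, hvker⟩ := exists_ker_vec hNne hNdet
        have trN : N 0 0 + N 1 1 = 0 := by
          have h' := (hTD i₀ hi₀I).1
          rw [Matrix.trace_fin_two] at h'
          simp only [hN, Matrix.sub_apply, Matrix.one_apply_eq]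
          linear_combination h'
        have hfixM : ∀ i ∈ I, ((ρ i : Matrix (Fin 2) (Fin 2) K) - 1).mulVec v = 0 := by
          intro i hi
          set M : Matrix (Fin 2) (Fin 2) K := (ρ i : Matrix (Fin 2) (Fin 2) K) - 1 with hM
          have hM2 : M * M = 0 := by
            have := t1 i hi
            rwa [pow_two] at this
          have trM : M 0 0 + M 1 1 = 0 := by
            have h' := (hTD i hi).1
            rw [Matrix.trace_fin_two] at h'
            simp only [hM, Matrix.sub_apply, Matrix.one_apply_eq]
            linear_combination h'
          have trNM : N 0 0 * M 0 0 + N 0 1 * M 1 0 + (N 1 0 * M 0 1 + N 1 1 * M 1 1) = 0 := by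
            have h' := (hTD (i₀ * i) (mul_mem hi₀I hi)).1
            have hval : ((ρ (i₀ * i) : GL (Fin 2) K) : Matrix (Fin 2) (Fin 2) K)
                = (N + 1) * (M + 1) := by
              rw [_root_.map_mul, Units.val_mul, hN, hM, sub_add_cancel, sub_add_cancel]
            rw [hval, Matrix.trace_fin_two, Matrix.mul_apply, Matrix.mul_apply,
              Fin.sum_univ_two, Fin.sum_univ_two] at h'
            simp only [Matrix.add_apply, Matrix.one_apply_eq,
              Matrix.one_apply_ne (by decide : (0 : Fin 2) ≠ 1),
              Matrix.one_apply_ne (by decide : (1 : Fin 2) ≠ 0), add_zero] at h'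
            linear_combination h' - trN - trM
          have hac := anticomm trN trM trNM
          have h1 : N.mulVec (M.mulVec v) = 0 := by
            rw [Matrix.mulVec_mulVec, show N * M = -(M * N) from eq_neg_of_add_eq_zero_left hac,
              Matrix.neg_mulVec, ← Matrix.mulVec_mulVec, hvker, Matrix.mulVec_zero, neg_zero]
          obtain ⟨c, hc⟩ := ker_span hNne hvker hv0 h1
          have hMMv : M.mulVec (M.mulVec v) = 0 := by
            rw [Matrix.mulVec_mulVec, hM2, Matrix.zero_mulVec]
          rw [hc, Matrix.mulVec_smul, hc, smul_smul] at hMMv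
          have hc0 : c = 0 := by
            rcases smul_eq_zero.mp hMMv with h' | h'
            · exact mul_self_eq_zero.mp h'
            · exact absurd h' hv0
          rw [hc, hc0, zero_smul]
        refine ⟨v, hv0, ?_, ?_⟩
        · intro i hi
          have h' := hfixM i hi
          rwa [Matrix.sub_mulVec, Matrix.one_mulVec, sub_eq_zero] at h'
        · intro d
          set Ad : Matrix (Fin 2) (Fin 2) K := (ρ d : Matrix (Fin 2) (Fin 2) K) with hAd
          set Ad' : Matrix (Fin 2) (Fin 2) K := (ρ d⁻¹ : Matrix (Fin 2) (Fin 2) K) with hAd'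
          have hAA' : Ad * Ad' = 1 := by
            rw [hAd, hAd', ← Units.val_mul, ← _root_.map_mul, mul_inv_cancel, _root_.map_one, Units.val_one]
          have hA'A : Ad' * Ad = 1 := by
            rw [hAd, hAd', ← Units.val_mul, ← _root_.map_mul, inv_mul_cancel, _root_.map_one, Units.val_one]
          have hMv := hfixM (d * i₀ * d⁻¹) ((‹I.Normal› : I.Normal).conj_mem i₀ hi₀I d)
          have hconj : ((ρ (d * i₀ * d⁻¹) : GL (Fin 2) K) : Matrix (Fin 2) (Fin 2) K) - 1
              = Ad * N * Ad' := by
            rw [_root_.map_mul, _root_.map_mul, Units.val_mul, Units.val_mul, hN, ← hAd, ← hAd',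
              Matrix.mul_sub, Matrix.mul_one, Matrix.sub_mul, hAA']
          rw [hconj] at hMv
          have hmm : Ad' * (Ad * N * Ad') = N * Ad' := by
            rw [← Matrix.mul_assoc, ← Matrix.mul_assoc, hA'A, Matrix.one_mul]
          have hk1 : (N * Ad').mulVec v = 0 := by
            rw [← hmm, ← Matrix.mulVec_mulVec, hMv, Matrix.mulVec_zero]
          have hk2 : N.mulVec (Ad'.mulVec v) = 0 := by
            rw [Matrix.mulVec_mulVec]
            exact hk1
          obtain ⟨c, hc⟩ := ker_span hNne hvker hv0 hk2
          have hcne : c ≠ 0 := by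
            intro h0
            apply hv0
            have h1 : Ad.mulVec (Ad'.mulVec v) = v := by
              rw [Matrix.mulVec_mulVec, hAA', Matrix.one_mulVec]
            rw [hc, h0, zero_smul, Matrix.mulVec_zero] at h1
            exact h1.symm
          refine ⟨c⁻¹, ?_⟩
          have hv' : c • Ad.mulVec v = v := by
            rw [← Matrix.mulVec_smul, ← hc, Matrix.mulVec_mulVec, hAA', Matrix.one_mulVec]
          have h2 := congrArg (fun x => c⁻¹ • x) hv'
          simp only [smul_smul, inv_mul_cancel₀ hcne, one_smul] at h2
          exact h2
    obtain ⟨w, hdetvw⟩ : ∃ w : Fin 2 → K, v 0 * w 1 - v 1 * w 0 ≠ 0 := by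
      by_cases h0 : v 0 = 0
      · have h1 : v 1 ≠ 0 := by
          intro h1
          apply hv0
          funext j
          fin_cases j <;> simp [h0, h1]
        refine ⟨![1, 0], ?_⟩
        intro hcon
        apply h1
        simp at hcon
        linear_combination hcon
      · refine ⟨![0, 1], ?_⟩
        intro hcon
        apply h0
        simp at hcon
        linear_combination hcon
    set Pm : Matrix (Fin 2) (Fin 2) K := Matrix.of ![![v 0, w 0], ![v 1, w 1]] with hPm
    have hPmdet : Pm.det ≠ 0 := by
      rw [Matrix.det_fin_two]
      intro hcon
      apply hdetvw
      have h00 : Pm 0 0 = v 0 := rfl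
      have h01 : Pm 0 1 = w 0 := rfl
      have h10 : Pm 1 0 = v 1 := rfl
      have h11 : Pm 1 1 = w 1 := rfl
      rw [h00, h01, h10, h11] at hcon
      linear_combination hcon
    set P : GL (Fin 2) K := Matrix.GeneralLinearGroup.mkOfDetNeZero Pm hPmdet with hP
    have hPcol : (fun i => (P : Matrix (Fin 2) (Fin 2) K) i 0) = v := by
      funext i
      have h' : (P : Matrix (Fin 2) (Fin 2) K) = Pm := rfl
      rw [h', hPm]
      fin_cases i <;> rfl
    refine ⟨P, ?_, ?_⟩
    · intro d
      obtain ⟨c, hc⟩ := heig d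
      exact (conj_entries (P := P) (M := ρ d) (c := c) (by rw [hPcol]; exact hc)).1
    · intro i hi
      have hcv : (ρ i : Matrix (Fin 2) (Fin 2) K).mulVec v = (1 : K) • v := by
        rw [one_smul]
        exact hfix i hi
      have hce := conj_entries (P := P) (M := ρ i) (c := (1 : K)) (by rw [hPcol]; exact hcv)
      refine ⟨hce.1, hce.2, ?_⟩
      have hPP : ((P⁻¹ : GL (Fin 2) K) : Matrix (Fin 2) (Fin 2) K)
          * (P : Matrix (Fin 2) (Fin 2) K) = 1 := by
        rw [← Units.val_mul, inv_mul_cancel, Units.val_one]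
      have hdetQ : ((P⁻¹ * ρ i * P : GL (Fin 2) K) : Matrix (Fin 2) (Fin 2) K).det = 1 := by
        rw [Units.val_mul, Units.val_mul, Matrix.det_mul, Matrix.det_mul]
        have h1 : ((P⁻¹ : GL (Fin 2) K) : Matrix (Fin 2) (Fin 2) K).det
            * ((P : GL (Fin 2) K) : Matrix (Fin 2) (Fin 2) K).det = 1 := by
          rw [← Matrix.det_mul, hPP, Matrix.det_one]
        have h2 := (hTD i hi).2
        calc ((P⁻¹ : GL (Fin 2) K) : Matrix (Fin 2) (Fin 2) K).det
              * (ρ i : Matrix (Fin 2) (Fin 2) K).det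
              * ((P : GL (Fin 2) K) : Matrix (Fin 2) (Fin 2) K).det
            = ((ρ i : Matrix (Fin 2) (Fin 2) K).det)
              * (((P⁻¹ : GL (Fin 2) K) : Matrix (Fin 2) (Fin 2) K).det
                * ((P : GL (Fin 2) K) : Matrix (Fin 2) (Fin 2) K).det) := by ring
          _ = 1 := by rw [h1, h2, mul_one]
      rw [Matrix.det_fin_two, hce.1, hce.2] at hdetQ
      linear_combination hdetQ
  tfae_have 1 → 2 := t12
  tfae_have 2 → 1 := t21
  tfae_have 2 → 3 := t23
  tfae_have 3 → 4 := t34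
  tfae_have 4 → 2 := t42
  tfae_finish
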